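/- Let N and n be natural numbers with n ≤ N. For every index x : Fin N, the number of choice sequences of length n after which x is NOT selected, multiplied by N, equals (N − n) times the total number of choice sequences ∏_{t=0}^{n−1}(N−t). Equivalently, the probability that x is not selected after n iterations of the partial shuffle is (N − n)/N. -/
import Mathlib


/-- The permutation of `Fin N` produced by `k` iterations of the partial
Fisher–Yates shuffle driven by the choice sequence `j`: iteration `t`
(for `t = 0, …, k-1`) swaps the array entries at positions `N-1-t` and
`j t`, the iterations being performed left-to-right (`t = 0` first).
As a permutation this is `swap (N-1) (j 0) * ⋯ * swap (N-1-(k-1)) (j (k-1))`,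
so that `fyPerm N k j p` is the final content of array slot `p` when the
array is initialized with `a[p] = p`. -/
def fyPerm (N k : ℕ) (j : ∀ t : Fin k, Fin (N - (t : ℕ))) : Equiv.Perm (Fin N) :=
  (List.ofFn fun t : Fin k =>
      Equiv.swap
        (⟨N - 1 - (t : ℕ), by have := (j t).isLt; omega⟩ : Fin N)
        (⟨((j t) : ℕ), by have := (j t).isLt; omega⟩ : Fin N)).prod

lemma fyPerm_zero (N : ℕ) (j : ∀ t : Fin 0, Fin (N - (t : ℕ))) : fyPerm N 0 j = 1 := by
  simp [fyPerm]

lemma fyPerm_snoc (N n : ℕ) (j' : ∀ t : Fin n, Fin (N - (t : ℕ))) (a : Fin (N - n)) :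
    fyPerm N (n+1) (Fin.snoc j' a) = fyPerm N n j' *
      Equiv.swap (⟨N - 1 - n, by have := a.isLt; omega⟩ : Fin N)
        (⟨(a : ℕ), by have := a.isLt; omega⟩ : Fin N) := by
  unfold fyPerm
  rw [List.ofFn_succ', List.concat_eq_append, List.prod_append, List.prod_singleton]
  congr 1
  · refine congrArg List.prod (congrArg List.ofFn (funext fun i => ?_))
    have hs : Fin.snoc (α := fun t : Fin (n+1) => Fin (N - (t : ℕ))) j' a i.castSucc = j' i :=
      by simp
    simp only [hs, Fin.coe_castSucc]
  · have h1 : (Fin.snoc (α := fun t : Fin (n+1) => Fin (N - (t : ℕ))) j' a (Fin.last n)) = a :=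
      Fin.snoc_last _ _
    congr 1 <;> simp [h1]

lemma inner_count (N n : ℕ) (hN : 0 < N) (q : Fin N) :
    (∑ a : Fin (N - n), if ((Equiv.swap (⟨N - 1 - n, by omega⟩ : Fin N)
          (⟨(a : ℕ), by have := a.isLt; omega⟩ : Fin N) q : Fin N) : ℕ) < N - (n+1)
        then 1 else 0)
      = if (q : ℕ) < N - n then N - n - 1 else 0 := by
  by_cases hq : (q : ℕ) < N - n
  · rw [if_pos hq]
    have hpos : 0 < N - n := lt_of_le_of_lt (Nat.zero_le _) hq
    obtain ⟨b, hbval⟩ : ∃ b : Fin (N - n),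
        (b : ℕ) = if (q : ℕ) = N - 1 - n then N - n - 1 else (q : ℕ) := by
      refine ⟨⟨if (q : ℕ) = N - 1 - n then N - n - 1 else (q : ℕ), ?_⟩, rfl⟩
      split_ifs <;> omega
    rw [show (∑ a : Fin (N - n), if ((Equiv.swap (⟨N - 1 - n, by omega⟩ : Fin N)
          (⟨(a : ℕ), by have := a.isLt; omega⟩ : Fin N) q : Fin N) : ℕ) < N - (n+1)
        then 1 else 0) = (Finset.univ.filter fun a : Fin (N - n) =>
          ((Equiv.swap (⟨N - 1 - n, by omega⟩ : Fin N)
          (⟨(a : ℕ), by have := a.isLt; omega⟩ : Fin N) q : Fin N) : ℕ) < N - (n+1)).card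
      from (Finset.card_filter _ _).symm]
    have hfe : (Finset.univ.filter fun a : Fin (N - n) =>
          ((Equiv.swap (⟨N - 1 - n, by omega⟩ : Fin N)
          (⟨(a : ℕ), by have := a.isLt; omega⟩ : Fin N) q : Fin N) : ℕ) < N - (n+1))
        = ({b}ᶜ : Finset (Fin (N - n))) := by
      ext a
      have ha := a.isLt
      simp only [Finset.mem_filter, Finset.mem_univ, true_and, Finset.mem_compl,
        Finset.mem_singleton, ne_eq]
      rw [Equiv.swap_apply_def]
      simp only [apply_ite (fun z : Fin N => (z : ℕ)), Fin.ext_iff, Fin.val_mk, hbval]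
      split_ifs <;> omega
    rw [hfe, Finset.card_compl, Finset.card_singleton, Fintype.card_fin]
  · rw [if_neg hq]
    apply Finset.sum_eq_zero
    intro a _
    have ha := a.isLt
    rw [if_neg]
    have h1 : Equiv.swap (⟨N - 1 - n, by omega⟩ : Fin N)
        (⟨(a : ℕ), by have := a.isLt; omega⟩ : Fin N) q = q := by
      apply Equiv.swap_apply_of_ne_of_ne <;>
        · intro h
          rw [Fin.ext_iff] at h
          simp at h
          omega
    rw [h1]
    omega

lemma fy_count (N : ℕ) (x : Fin N) (n : ℕ) :
    (Finset.univ.filter fun j : ∀ t : Fin n, Fin (N - (t : ℕ)) =>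
        (((fyPerm N n j)⁻¹ x : Fin N) : ℕ) < N - n).card
      = ∏ t ∈ Finset.range n, (N - 1 - t) := by
  have hN : 0 < N := x.pos
  induction n with
  | zero =>
    simp only [Finset.prod_range_zero]
    have : (Finset.univ.filter fun j : ∀ t : Fin 0, Fin (N - (t : ℕ)) =>
        (((fyPerm N 0 j)⁻¹ x : Fin N) : ℕ) < N - 0) = Finset.univ := by
      apply Finset.filter_true_of_mem
      intro j _
      have := x.isLt
      omega
    rw [this]
    simp [Finset.card_univ]
  | succ n ih =>
    have key : (Finset.univ.filter fun j : ∀ t : Fin (n+1), Fin (N - (t : ℕ)) =>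
          (((fyPerm N (n+1) j)⁻¹ x : Fin N) : ℕ) < N - (n+1)).card
        = (Finset.univ.filter fun q : Fin (N - n) × (∀ t : Fin n, Fin (N - (t : ℕ))) =>
            (((fyPerm N (n+1) (Fin.snoc q.2 q.1))⁻¹ x : Fin N) : ℕ) < N - (n+1)).card := by
      apply Finset.card_equiv (Fin.snocEquiv (fun t : Fin (n+1) => Fin (N - (t : ℕ)))).symm
      intro j
      simp only [Finset.mem_filter, Finset.mem_univ, true_and, Fin.snocEquiv,
        Equiv.coe_fn_symm_mk]
      rw [Fin.snoc_init_self]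
    rw [key, Finset.card_filter, Fintype.sum_prod_type_right]
    have hterm : ∀ j' : ∀ t : Fin n, Fin (N - (t : ℕ)),
        (∑ a : Fin (N - n),
            if (((fyPerm N (n+1) (Fin.snoc j' a))⁻¹ x : Fin N) : ℕ) < N - (n+1) then 1 else 0)
          = if (((fyPerm N n j')⁻¹ x : Fin N) : ℕ) < N - n then N - n - 1 else 0 := by
      intro j'
      have step : ∀ a : Fin (N - n),
          ((((fyPerm N (n+1) (Fin.snoc j' a))⁻¹ x : Fin N)) : ℕ)
            = ((Equiv.swap (⟨N - 1 - n, by omega⟩ : Fin N)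
              (⟨(a : ℕ), by have := a.isLt; omega⟩ : Fin N) ((fyPerm N n j')⁻¹ x) : Fin N) : ℕ) := by
        intro a
        rw [fyPerm_snoc, mul_inv_rev, Equiv.Perm.mul_apply, Equiv.swap_inv]
      calc (∑ a : Fin (N - n),
            if (((fyPerm N (n+1) (Fin.snoc j' a))⁻¹ x : Fin N) : ℕ) < N - (n+1) then 1 else 0)
          = ∑ a : Fin (N - n), if ((Equiv.swap (⟨N - 1 - n, by omega⟩ : Fin N)
              (⟨(a : ℕ), by have := a.isLt; omega⟩ : Fin N) ((fyPerm N n j')⁻¹ x) : Fin N) : ℕ)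
              < N - (n+1) then 1 else 0 := by
            apply Finset.sum_congr rfl
            intro a _
            rw [step a]
        _ = _ := inner_count N n hN ((fyPerm N n j')⁻¹ x)
    rw [Finset.sum_congr rfl (fun j' _ => hterm j')]
    rw [Finset.sum_ite, Finset.sum_const, Finset.sum_const_zero, add_zero, smul_eq_mul]
    rw [ih, Finset.prod_range_succ]
    congr 1
    omega

lemma fy_arith (N n : ℕ) :
    (∏ t ∈ Finset.range n, (N - 1 - t)) * N = (N - n) * ∏ t ∈ Finset.range n, (N - t) := by
  induction n with
  | zero => simp [Nat.mul_comm]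
  | succ n ih =>
    rw [Finset.prod_range_succ, Finset.prod_range_succ,
      show N - 1 - n = N - (n+1) from by omega, mul_right_comm, ih]
    ring

/-- The probability that a fixed index `x : Fin N` is *not* selected after
`n` iterations of the partial Fisher–Yates shuffle is `(N - n) / N`: the
number of choice sequences of length `n` after which `x` is not selected
(i.e. `(fyPerm N n j)⁻¹ x < N - n`), multiplied by `N`, equals `N - n`
times the total number `∏_{t<n} (N - t)` of choice sequences. -/
theorem fy_not_selected_count (N n : ℕ) (hn : n ≤ N) (x : Fin N) :
    (Finset.univ.filter fun j : ∀ t : Fin n, Fin (N - (t : ℕ)) =>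
        (((fyPerm N n j)⁻¹ x : Fin N) : ℕ) < N - n).card * N
      = (N - n) * ∏ t ∈ Finset.range n, (N - t) := by
  rw [fy_count N x n, fy_arith]
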